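/- arXiv:1702.08247 — 2 statements merged into one kernel-verified Lean document; each statement's English description precedes it below -/
import Mathlib

section
/- Let a_1,...,a_m ∈ ℝ^n, let w_1,...,w_m be positive reals (edge weights), and let p_1,...,p_m ∈ [0,1]. Then the expectation over independent Bernoulli variables π_1,...,π_m with π_i ~ Bern(p_i) of det(Σ_{i=1}^m π_i w_i a_i a_iᵀ) equals det(Σ_{i=1}^m p_i w_i a_i a_iᵀ). In particular, the expected weighted number of spanning trees of a random edge-weighted graph whose i-th edge is operational independently with probability p_i (with a_i the corresponding column of the reduced incidence matrix) equals the weighted number of spanning trees of the deterministic graph with edge weights p_i w_i. -/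
open Matrix Finset

private lemma det_add_smul_vecMulVec {n : ℕ} (B : Matrix (Fin n) (Fin n) ℝ)
    (u v : Fin n → ℝ) (c : ℝ) :
    (B + c • Matrix.vecMulVec u v).det
      = B.det + c * ∑ j, u j * (B.updateRow j v).det := by
  classical
  set N : Matrix (Fin n) (Fin n) ℝ := c • Matrix.vecMulVec u v with hN
  have hNrow : ∀ j, N j = (c * u j) • v := by
    intro j; funext k
    simp [hN, Matrix.vecMulVec_apply, mul_assoc]
  have hdet : (B + N).det
      = ∑ s : Finset (Fin n),
          Matrix.detRowAlternating (s.piecewise B N) :=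
    Matrix.detRowAlternating.toMultilinearMap.map_add_univ B N
  have hterm : ∀ s : Finset (Fin n),
      Matrix.detRowAlternating (s.piecewise B N)
        = (∏ j ∈ sᶜ, (c * u j)) *
            Matrix.detRowAlternating (s.piecewise B (fun _ => v)) := by
    intro s
    have hsp : s.piecewise B N
        = fun i => (if i ∈ s then (1:ℝ) else c * u i) •
            (s.piecewise B (fun _ => v)) i := by
      funext i
      by_cases h : i ∈ s <;> simp [Finset.piecewise, h, hNrow]
    have := Matrix.detRowAlternating.toMultilinearMap.map_smul_univ
      (fun i => if i ∈ s then (1:ℝ) else c * u i) (s.piecewise B (fun _ => v))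
    rw [hsp]
    rw [show (Matrix.detRowAlternating (fun i =>
        (if i ∈ s then (1:ℝ) else c * u i) • (s.piecewise B (fun _ => v)) i) : ℝ)
      = (∏ i, if i ∈ s then (1:ℝ) else c * u i) •
          Matrix.detRowAlternating (s.piecewise B (fun _ => v)) from this]
    rw [smul_eq_mul]
    congr 1
    rw [← Finset.prod_mul_prod_compl s]
    rw [Finset.prod_congr rfl (fun i hi => if_pos hi), Finset.prod_const_one, one_mul]
    exact Finset.prod_congr rfl fun i hi => if_neg (Finset.mem_compl.mp hi)
  have hzero : ∀ s : Finset (Fin n), 2 ≤ sᶜ.card →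
      Matrix.detRowAlternating (s.piecewise B (fun _ => v)) = 0 := by
    intro s hs
    obtain ⟨x, hx, y, hy, hxy⟩ := Finset.one_lt_card.mp hs
    refine Matrix.detRowAlternating.map_eq_zero_of_eq _ ?_ hxy
    exact (Finset.piecewise_eq_of_notMem _ _ _ (Finset.mem_compl.mp hx)).trans
      (Finset.piecewise_eq_of_notMem s B (fun _ => v) (Finset.mem_compl.mp hy)).symm
  -- restrict the sum
  set T : Finset (Finset (Fin n)) :=
    insert Finset.univ (Finset.univ.image (fun j : Fin n => ({j} : Finset (Fin n))ᶜ)) with hT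
  have hrestrict : ∑ s : Finset (Fin n), Matrix.detRowAlternating (s.piecewise B N)
      = ∑ s ∈ T, Matrix.detRowAlternating (s.piecewise B N) := by
    refine (Finset.sum_subset (Finset.subset_univ T) ?_).symm
    intro s _ hsT
    have h1 : s ≠ Finset.univ := by
      intro h; exact hsT (by simp [hT, h])
    have h2 : ∀ j, s ≠ ({j} : Finset (Fin n))ᶜ := by
      intro j h
      exact hsT (by simp [hT]; right; exact ⟨j, h.symm⟩)
    have hcard : 2 ≤ sᶜ.card := by
      by_contra hc
      push_neg at hc
      interval_cases h : sᶜ.card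
      · have : sᶜ = ∅ := Finset.card_eq_zero.mp h
        exact h1 (by simpa [Finset.compl_eq_empty_iff] using this)
      · obtain ⟨j, hj⟩ := Finset.card_eq_one.mp h
        exact h2 j (by rw [← compl_compl s, hj])
    rw [hterm s, hzero s hcard, mul_zero]
  have hTsum : ∑ s ∈ T, Matrix.detRowAlternating (s.piecewise B N)
      = B.det + ∑ j, (c * u j) * (B.updateRow j v).det := by
    have huniv_notmem : (Finset.univ : Finset (Fin n)) ∉
        Finset.univ.image (fun j : Fin n => ({j} : Finset (Fin n))ᶜ) := by
      simp only [Finset.mem_image, Finset.mem_univ, true_and]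
      rintro ⟨j, hj⟩
      have := congrArg (·ᶜ) hj
      simp at this
    rw [hT, Finset.sum_insert huniv_notmem]
    congr 1
    · exact congrArg Matrix.detRowAlternating (Finset.piecewise_univ B N)
    · rw [Finset.sum_image (by
        intro x _ y _ h
        have := congrArg (·ᶜ) h
        simp only [compl_compl] at this
        exact Finset.singleton_injective this)]
      refine Finset.sum_congr rfl fun j _ => ?_
      refine (congrArg Matrix.detRowAlternating
        ((Finset.piecewise_compl _ _ _).trans (Finset.piecewise_singleton _ _ _))).trans ?_
      have : Function.update B j (N j) = B.updateRow j ((c * u j) • v) := by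
        rw [hNrow j]; rfl
      rw [this]
      exact Matrix.det_updateRow_smul B j (c * u j) v
  calc (B + N).det = ∑ s : Finset (Fin n), Matrix.detRowAlternating (s.piecewise B N) := hdet
    _ = B.det + ∑ j, (c * u j) * (B.updateRow j v).det := by rw [hrestrict, hTsum]
    _ = B.det + c * ∑ j, u j * (B.updateRow j v).det := by
        rw [Finset.mul_sum]; congr 1; exact Finset.sum_congr rfl fun j _ => by ring

private lemma det_affine {n : ℕ} (B : Matrix (Fin n) (Fin n) ℝ) (u v : Fin n → ℝ) (c : ℝ) :
    (B + c • Matrix.vecMulVec u v).det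
      = (1 - c) * B.det + c * (B + Matrix.vecMulVec u v).det := by
  have h1 := det_add_smul_vecMulVec B u v c
  have h2 := det_add_smul_vecMulVec B u v 1
  rw [one_smul] at h2
  rw [h1, h2]; ring
private lemma smul_vecMulVec_eq {n : ℕ} (u v : Fin n → ℝ) (t : ℝ) :
    t • Matrix.vecMulVec u v = Matrix.vecMulVec (t • u) v := by
  ext i k
  simp [Matrix.vecMulVec_apply, mul_assoc]

private lemma bernoulli_det_aux {m n : ℕ} (a : Fin m → Fin n → ℝ) (w p : Fin m → ℝ)
    (s : Finset (Fin m)) :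
    ∀ A : Matrix (Fin n) (Fin n) ℝ,
      ∑ S ∈ s.powerset,
          (∏ i ∈ S, p i) * (∏ i ∈ s \ S, (1 - p i)) *
            (A + ∑ i ∈ S, w i • Matrix.vecMulVec (a i) (a i)).det
        = (A + ∑ i ∈ s, (p i * w i) • Matrix.vecMulVec (a i) (a i)).det := by
  classical
  induction s using Finset.induction_on with
  | empty => intro A; simp
  | @insert j s hj IH =>
    intro A
    rw [Finset.sum_powerset_insert hj]
    have hjss : j ∉ s \ s := by simp
    have e1 : ∑ S ∈ s.powerset,
        (∏ i ∈ S, p i) * (∏ i ∈ insert j s \ S, (1 - p i)) *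
          (A + ∑ i ∈ S, w i • Matrix.vecMulVec (a i) (a i)).det
        = (1 - p j) * (A + ∑ i ∈ s, (p i * w i) • Matrix.vecMulVec (a i) (a i)).det := by
      rw [← IH A, Finset.mul_sum]
      refine Finset.sum_congr rfl fun S hS => ?_
      have hSs := Finset.mem_powerset.mp hS
      have hjS : j ∉ S := fun h => hj (hSs h)
      rw [Finset.insert_sdiff_of_notMem s hjS,
        Finset.prod_insert (by simp [hj])]
      ring
    have e2 : ∑ S ∈ s.powerset,
        (∏ i ∈ insert j S, p i) * (∏ i ∈ insert j s \ insert j S, (1 - p i)) *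
          (A + ∑ i ∈ insert j S, w i • Matrix.vecMulVec (a i) (a i)).det
        = p j * (A + w j • Matrix.vecMulVec (a j) (a j)
            + ∑ i ∈ s, (p i * w i) • Matrix.vecMulVec (a i) (a i)).det := by
      rw [← IH (A + w j • Matrix.vecMulVec (a j) (a j)), Finset.mul_sum]
      refine Finset.sum_congr rfl fun S hS => ?_
      have hSs := Finset.mem_powerset.mp hS
      have hjS : j ∉ S := fun h => hj (hSs h)
      have h3 : insert j s \ insert j S = s \ S := by
        ext x
        simp only [Finset.mem_sdiff, Finset.mem_insert, not_or]
        constructor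
        · rintro ⟨hx1, hx2, hx3⟩
          rcases hx1 with rfl | h
          · exact absurd rfl hx2
          · exact ⟨h, hx3⟩
        · rintro ⟨h1, h2⟩
          exact ⟨Or.inr h1, fun h => hj (h ▸ h1), h2⟩
      rw [h3, Finset.prod_insert hjS, Finset.sum_insert hjS, ← add_assoc]
      ring
    rw [e1, e2, Finset.sum_insert hj, ← add_assoc]
    set B := A + ∑ i ∈ s, (p i * w i) • Matrix.vecMulVec (a i) (a i) with hB
    have hcomm1 : A + (p j * w j) • Matrix.vecMulVec (a j) (a j)
        + ∑ i ∈ s, (p i * w i) • Matrix.vecMulVec (a i) (a i)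
        = B + (p j * w j) • Matrix.vecMulVec (a j) (a j) := by
      rw [hB]; abel
    have hcomm2 : A + w j • Matrix.vecMulVec (a j) (a j)
        + ∑ i ∈ s, (p i * w i) • Matrix.vecMulVec (a i) (a i)
        = B + w j • Matrix.vecMulVec (a j) (a j) := by
      rw [hB]; abel
    rw [hcomm1, hcomm2]
    have key : (p j * w j) • Matrix.vecMulVec (a j) (a j)
        = p j • Matrix.vecMulVec (w j • a j) (a j) := by
      rw [← smul_vecMulVec_eq, smul_smul]
    rw [key, det_affine B (w j • a j) (a j) (p j), ← smul_vecMulVec_eq]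


/-- The expectation over independent Bernoulli variables `π i ~ Bern (p i)` of
`det (∑ i, π i • w i • a i (a i)ᵀ)` equals `det (∑ i, p i • w i • a i (a i)ᵀ)`.
By the matrix-tree theorem, when `a i` are the columns of the reduced incidence
matrix of a graph, this says that the expected weighted number of spanning
trees of the random graph equals the weighted number of spanning trees of the
deterministic graph with edge weights `p i * w i`. -/
theorem expected_weighted_tree_connectivity
    (m n : ℕ) (a : Fin m → Fin n → ℝ) (w : Fin m → ℝ) (hw : ∀ i, 0 < w i)
    (p : Fin m → ℝ) (hp : ∀ i, p i ∈ Set.Icc (0 : ℝ) 1) :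
    ∑ S ∈ Finset.univ.powerset,
        (∏ i ∈ S, p i) * (∏ i ∈ Sᶜ, (1 - p i)) *
          (∑ i ∈ S, w i • Matrix.vecMulVec (a i) (a i)).det
      = (∑ i : Fin m, (p i * w i) • Matrix.vecMulVec (a i) (a i)).det := by
  classical
  have h := bernoulli_det_aux a w p Finset.univ (0 : Matrix (Fin n) (Fin n) ℝ)
  simpa [Finset.compl_eq_univ_sdiff] using h
end

section
/- Let H̄ be an m×n real matrix (the normalized measurement matrix, m ≥ n) and let p_1,...,p_m ∈ [0,1]. Let P = diag(p_1,...,p_m). Then the expectation over independent Bernoulli variables π_1,...,π_m with π_i ~ Bern(p_i) of det(H̄ᵀ Π H̄), where Π = diag(π_1,...,π_m), equals det(H̄ᵀ P H̄). That is, the expected value of the D-optimality criterion under independent sensor failures (sensor i surviving with probability p_i) equals the D-optimality criterion of the probability-weighted Fisher information matrix. -/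
open Matrix Finset

private lemma expand_det (m n : ℕ) (H : Matrix (Fin m) (Fin n) ℝ) (q : Fin m → ℝ) :
    (Hᵀ * Matrix.diagonal q * H).det
      = ∑ c : Fin n → Fin m,
          (∏ j, q (c j)) * ((∏ j, H (c j) j) * (Matrix.of fun j k => H (c j) k).det) := by
  have hM : (Hᵀ * Matrix.diagonal q * H)
      = Matrix.of (fun j => ∑ i : Fin m, (q i * H i j) • (fun k => H i k)) := by
    ext j k
    rw [Matrix.mul_apply]
    simp only [Matrix.mul_diagonal, Matrix.transpose_apply, Matrix.of_apply,
      Finset.sum_apply, Pi.smul_apply, smul_eq_mul]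
    exact Finset.sum_congr rfl fun i _ => by ring
  rw [hM]
  have h1 : (Matrix.of (fun j => ∑ i : Fin m, (q i * H i j) • (fun k => H i k))).det
      = (Matrix.detRowAlternating : (Fin n → ℝ) [⋀^Fin n]→ₗ[ℝ] ℝ).toMultilinearMap
          (fun j => ∑ i : Fin m, (q i * H i j) • (fun k => H i k)) := rfl
  rw [h1, MultilinearMap.map_sum]
  refine Finset.sum_congr rfl fun c _ => ?_
  rw [MultilinearMap.map_smul_univ]
  have h2 : (Matrix.detRowAlternating : (Fin n → ℝ) [⋀^Fin n]→ₗ[ℝ] ℝ).toMultilinearMap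
      (fun j k => H (c j) k) = (Matrix.of fun j k => H (c j) k).det := rfl
  rw [h2, smul_eq_mul, Finset.prod_mul_distrib]
  ring

private lemma indicator_sum (m : ℕ) (p : Fin m → ℝ) (T : Finset (Fin m)) :
    ∑ S ∈ Finset.univ.powerset,
        (∏ i ∈ S, p i) * (∏ i ∈ Sᶜ, (1 - p i)) * (if T ⊆ S then (1 : ℝ) else 0)
      = ∏ i ∈ T, p i := by
  have key : ∀ S : Finset (Fin m),
      (∏ i ∈ S, p i) * (∏ i ∈ Sᶜ, (1 - p i)) * (if T ⊆ S then (1 : ℝ) else 0)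
        = (∏ i ∈ S, p i) * ∏ i ∈ Finset.univ \ S,
            ((1 - p i) * (if i ∈ T then 0 else 1)) := by
    intro S
    rw [Finset.prod_mul_distrib, ← Finset.compl_eq_univ_sdiff]
    by_cases h : T ⊆ S
    · have : ∀ i ∈ Sᶜ, (if i ∈ T then (0:ℝ) else 1) = 1 := by
        intro i hi
        simp only [Finset.mem_compl] at hi
        rw [if_neg fun hT => hi (h hT)]
      rw [if_pos h, Finset.prod_congr rfl this, Finset.prod_const_one]
      ring
    · obtain ⟨a, haT, haS⟩ := Finset.not_subset.mp h
      have : ∏ i ∈ Sᶜ, (if i ∈ T then (0:ℝ) else 1) = 0 :=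
        Finset.prod_eq_zero (Finset.mem_compl.mpr haS) (if_pos haT)
      rw [if_neg h, this]
      ring
  rw [Finset.sum_congr rfl fun S _ => key S, ← Finset.prod_add]
  have h3 : ∀ i : Fin m, p i + (1 - p i) * (if i ∈ T then (0:ℝ) else 1)
      = if i ∈ T then p i else 1 := by
    intro i; by_cases h : i ∈ T <;> simp [h]
  rw [Finset.prod_congr rfl fun i _ => h3 i, ← Finset.prod_filter]
  congr 1
  simp

/-- The expected value of the D-optimality criterion `det (H̄ᵀ Π H̄)` under
independent sensor failures (sensor `i` surviving with probability `p i`)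
equals `det (H̄ᵀ P H̄)` with `P = diag (p 1, …, p m)`. -/
theorem expected_D_optimality
    (m n : ℕ) (hmn : m ≥ n) (H : Matrix (Fin m) (Fin n) ℝ)
    (p : Fin m → ℝ) (hp : ∀ i, p i ∈ Set.Icc (0 : ℝ) 1) :
    ∑ S ∈ Finset.univ.powerset,
        (∏ i ∈ S, p i) * (∏ i ∈ Sᶜ, (1 - p i)) *
          (Hᵀ * Matrix.diagonal (fun i => if i ∈ S then (1 : ℝ) else 0) * H).det
      = (Hᵀ * Matrix.diagonal p * H).det := by
  simp_rw [expand_det, Finset.mul_sum]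
  rw [Finset.sum_comm]
  refine Finset.sum_congr rfl fun c _ => ?_
  set K : ℝ := (∏ j, H (c j) j) * (Matrix.of fun j k => H (c j) k).det with hK
  by_cases hc : Function.Injective c
  · set T : Finset (Fin m) := Finset.image c Finset.univ with hT
    have him : ∀ S : Finset (Fin m),
        (∏ j, if c j ∈ S then (1:ℝ) else 0) = if T ⊆ S then 1 else 0 := by
      intro S
      by_cases h : T ⊆ S
      · rw [if_pos h]
        exact Finset.prod_eq_one fun j _ =>
          if_pos (h (Finset.mem_image_of_mem c (Finset.mem_univ j)))
      · rw [if_neg h]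
        obtain ⟨a, haT, haS⟩ := Finset.not_subset.mp h
        obtain ⟨j, _, rfl⟩ := Finset.mem_image.mp haT
        exact Finset.prod_eq_zero (Finset.mem_univ j) (if_neg haS)
    have step : ∀ S ∈ Finset.univ.powerset,
        (∏ i ∈ S, p i) * (∏ i ∈ Sᶜ, (1 - p i)) *
            ((∏ j, if c j ∈ S then (1:ℝ) else 0) * K)
          = ((∏ i ∈ S, p i) * (∏ i ∈ Sᶜ, (1 - p i)) * (if T ⊆ S then (1:ℝ) else 0)) * K := by
      intro S _
      rw [him S]; ring
    rw [Finset.sum_congr rfl step, ← Finset.sum_mul, indicator_sum m p T, hT,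
      Finset.prod_image fun x _ y _ h => hc h]
  · have : (Matrix.of fun j k => H (c j) k).det = 0 := by
      rw [Function.not_injective_iff] at hc
      obtain ⟨j, j', hjj', hne⟩ := hc
      exact Matrix.det_zero_of_row_eq hne (by ext k; simp [hjj'])
    rw [hK, this, mul_zero]
    simp
end
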